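/- In the (n,p,q)-planted partition model with planted clusters L, R of size n/2 and p > q, if T* is a tree whose top split is (L, R) and T is any tree that is not ε-good for some 0 < ε < 1/6, then E[cost_G(T)] > E[cost_G(T*)] + (1/16)·ε·(p−q)·n³. -/

import Mathlib

open Finset

/-- A rooted binary tree whose leaves are labeled by elements of `Fin n`. -/
inductive HTree (n : ℕ) : Type where
  | leaf : Fin n → HTree n
  | node : HTree n → HTree n → HTree n

namespace HTree

variable {n : ℕ}

/-- The list of leaf labels, left to right. -/
def leafList : HTree n → List (Fin n)
  | .leaf v => [v]
  | .node l r => l.leafList ++ r.leafList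

/-- The set of leaf labels of a tree. -/
def leaves (T : HTree n) : Finset (Fin n) := T.leafList.toFinset

/-- `T` is a hierarchical clustering tree of the whole vertex set `Fin n`:
its leaves are in one-to-one correspondence with `Fin n`. -/
def IsFullTree (T : HTree n) : Prop := T.leafList.Nodup ∧ T.leaves = Finset.univ

/-- `|leaves(T[i ∨ j])|`: the number of leaves of the subtree rooted at the
lowest common ancestor of leaves `i` and `j`. -/
def lcaSize : HTree n → Fin n → Fin n → ℕ
  | .leaf _, _, _ => 1
  | .node l r, i, j =>
    if i ∈ l.leaves ∧ j ∈ l.leaves then l.lcaSize i j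
    else if i ∈ r.leaves ∧ j ∈ r.leaves then r.lcaSize i j
    else (l.leaves ∪ r.leaves).card

/-- `cost_G(T) = Σ_{{i,j}} w_{ij} |leaves(T[i ∨ j])|`, the sum being over
unordered pairs (represented as ordered pairs `p.1 < p.2`). -/
def pairCost (w : Fin n → Fin n → ℝ) (T : HTree n) : ℝ :=
  ∑ p ∈ Finset.univ.filter (fun p : Fin n × Fin n => p.1 < p.2),
    w p.1 p.2 * (T.lcaSize p.1 p.2 : ℝ)

/-- `w(A, B)`: total weight of edges between `A` and `B`. -/
def cut (w : Fin n → Fin n → ℝ) (A B : Finset (Fin n)) : ℝ :=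
  ∑ i ∈ A, ∑ j ∈ B, w i j

/-- The sum-of-splits formulation of the cost:
`Σ over internal splits S → (S₁,S₂) of |S| ⬝ w(S₁,S₂)`. -/
def splitCost (w : Fin n → Fin n → ℝ) : HTree n → ℝ
  | .leaf _ => 0
  | .node l r =>
      ((l.leaves ∪ r.leaves).card : ℝ) * cut w l.leaves r.leaves
        + splitCost w l + splitCost w r

/-- `Subtree t T`: `t` occurs as a subtree of `T`. -/
inductive Subtree : HTree n → HTree n → Prop
  | refl (t : HTree n) : Subtree t t
  | left {t l r : HTree n} : Subtree t l → Subtree t (.node l r)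
  | right {t l r : HTree n} : Subtree t r → Subtree t (.node l r)

end HTree

namespace HTree

/-- `T` is `ε`-good for the planted bipartition `(L, Lᶜ)`: it contains a split
`S → (S₁, S₂)` with `|S ∩ L|, |S ∩ R| ≥ (1-ε)n/2`, and `|S₁ ∩ L| ≤ εn/2` and
`|S₂ ∩ R| ≤ εn/2` (or with `S₁, S₂` swapped), where `R = Lᶜ`. -/
def EpsGood (ε : ℝ) (L : Finset (Fin n)) (T : HTree n) : Prop :=
  ∃ l r : HTree n, Subtree (.node l r) T ∧
    (1 - ε) * n / 2 ≤ (((l.leaves ∪ r.leaves) ∩ L).card : ℝ) ∧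
    (1 - ε) * n / 2 ≤ (((l.leaves ∪ r.leaves) ∩ Lᶜ).card : ℝ) ∧
    ((((l.leaves ∩ L).card : ℝ) ≤ ε * n / 2 ∧ ((r.leaves ∩ Lᶜ).card : ℝ) ≤ ε * n / 2) ∨
     (((l.leaves ∩ Lᶜ).card : ℝ) ≤ ε * n / 2 ∧ ((r.leaves ∩ L).card : ℝ) ≤ ε * n / 2))

end HTree

/-! ### Auxiliary development -/

namespace HTree

variable {n : ℕ}

lemma leaves_node (l r : HTree n) : (HTree.node l r).leaves = l.leaves ∪ r.leaves := by
  simp [leaves, leafList, List.toFinset_append]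

lemma leaves_leaf (v : Fin n) : (HTree.leaf v).leaves = {v} := by
  simp [leaves, leafList]

lemma nodup_node {l r : HTree n} (h : (HTree.node l r).leafList.Nodup) :
    l.leafList.Nodup ∧ r.leafList.Nodup ∧ Disjoint l.leaves r.leaves := by
  rw [leafList, List.nodup_append] at h
  refine ⟨h.1, h.2.1, ?_⟩
  rw [Finset.disjoint_left]
  intro a ha hb
  simp only [leaves, List.mem_toFinset] at ha hb
  exact h.2.2 a ha a hb rfl

lemma mem_leafList_nonempty (t : HTree n) : ∃ v, v ∈ t.leafList := by
  induction t with
  | leaf v => exact ⟨v, by simp [leafList]⟩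
  | node l r ihl ihr =>
      obtain ⟨v, hv⟩ := ihl
      exact ⟨v, by simp [leafList, hv]⟩

lemma lcaSize_comm (t : HTree n) (i j : Fin n) : t.lcaSize i j = t.lcaSize j i := by
  induction t with
  | leaf v => rfl
  | node l r ihl ihr =>
      by_cases h1 : i ∈ l.leaves <;> by_cases h2 : j ∈ l.leaves <;>
        by_cases h3 : i ∈ r.leaves <;> by_cases h4 : j ∈ r.leaves <;>
        simp_all [lcaSize]

/-- `F k = (k³ - k)/3`, the clique cost. -/
noncomputable def F (k : ℕ) : ℝ := ((k : ℝ) ^ 3 - k) / 3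

lemma F_add (x y : ℕ) : F (x + y) = F x + F y + (x : ℝ) * y * ((x : ℝ) + y) := by
  simp only [F]
  push_cast
  ring

/-- The "surplus" of a tree: the total contribution of cross-cluster leaves to
within-cluster lca sizes. -/
noncomputable def sur (L : Finset (Fin n)) : HTree n → ℝ
  | .leaf _ => 0
  | .node l r =>
      (((l.leaves ∩ L).card : ℝ) * ((r.leaves ∩ L).card : ℝ) *
          (((l.leaves ∩ Lᶜ).card : ℝ) + ((r.leaves ∩ Lᶜ).card : ℝ))
        + ((l.leaves ∩ Lᶜ).card : ℝ) * ((r.leaves ∩ Lᶜ).card : ℝ) *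
          (((l.leaves ∩ L).card : ℝ) + ((r.leaves ∩ L).card : ℝ)))
        + sur L l + sur L r

lemma sur_nonneg (L : Finset (Fin n)) (t : HTree n) : 0 ≤ sur L t := by
  induction t with
  | leaf v => simp [sur]
  | node l r ihl ihr =>
      have h1 : (0:ℝ) ≤ ((l.leaves ∩ L).card : ℝ) * ((r.leaves ∩ L).card : ℝ) *
          (((l.leaves ∩ Lᶜ).card : ℝ) + ((r.leaves ∩ Lᶜ).card : ℝ)) := by positivity
      have h2 : (0:ℝ) ≤ ((l.leaves ∩ Lᶜ).card : ℝ) * ((r.leaves ∩ Lᶜ).card : ℝ) *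
          (((l.leaves ∩ L).card : ℝ) + ((r.leaves ∩ L).card : ℝ)) := by positivity
      simp only [sur]
      linarith

lemma sur_of_subset (L : Finset (Fin n)) (t : HTree n) (h : t.leaves ⊆ L) : sur L t = 0 := by
  induction t with
  | leaf v => simp [sur]
  | node l r ihl ihr =>
      rw [leaves_node] at h
      have hl : l.leaves ⊆ L := fun x hx => h (Finset.mem_union_left _ hx)
      have hr : r.leaves ⊆ L := fun x hx => h (Finset.mem_union_right _ hx)
      have hcl : l.leaves ∩ Lᶜ = ∅ := by
        rw [Finset.eq_empty_iff_forall_notMem]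
        intro x hx
        rw [Finset.mem_inter, Finset.mem_compl] at hx
        exact hx.2 (hl hx.1)
      have hcr : r.leaves ∩ Lᶜ = ∅ := by
        rw [Finset.eq_empty_iff_forall_notMem]
        intro x hx
        rw [Finset.mem_inter, Finset.mem_compl] at hx
        exact hx.2 (hr hx.1)
      simp [sur, hcl, hcr, ihl hl, ihr hr]

lemma sur_of_subset_compl (L : Finset (Fin n)) (t : HTree n) (h : t.leaves ⊆ Lᶜ) :
    sur L t = 0 := by
  induction t with
  | leaf v => simp [sur]
  | node l r ihl ihr =>
      rw [leaves_node] at h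
      have hl : l.leaves ⊆ Lᶜ := fun x hx => h (Finset.mem_union_left _ hx)
      have hr : r.leaves ⊆ Lᶜ := fun x hx => h (Finset.mem_union_right _ hx)
      have hcl : l.leaves ∩ L = ∅ := by
        rw [Finset.eq_empty_iff_forall_notMem]
        intro x hx
        rw [Finset.mem_inter] at hx
        have := hl hx.1
        rw [Finset.mem_compl] at this
        exact this hx.2
      have hcr : r.leaves ∩ L = ∅ := by
        rw [Finset.eq_empty_iff_forall_notMem]
        intro x hx
        rw [Finset.mem_inter] at hx
        have := hr hx.1
        rw [Finset.mem_compl] at this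
        exact this hx.2
      simp [sur, hcl, hcr, ihl hl, ihr hr]

lemma card_inter_add_card_inter_compl (S L : Finset (Fin n)) :
    (S ∩ L).card + (S ∩ Lᶜ).card = S.card := by
  rw [← Finset.card_union_of_disjoint]
  · congr 1
    rw [← Finset.inter_union_distrib_left]
    simp
  · intro x h1 h2 a ha
    have h1' := h1 ha
    have h2' := h2 ha
    rw [Finset.mem_inter] at h1' h2'
    rw [Finset.mem_compl] at h2'
    exact absurd h1'.2 h2'.2

lemma card_union_inter (A B C : Finset (Fin n)) (h : Disjoint A B) :
    ((A ∪ B) ∩ C).card = (A ∩ C).card + (B ∩ C).card := by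
  rw [Finset.union_inter_distrib_right]
  exact Finset.card_union_of_disjoint (h.mono Finset.inter_subset_left Finset.inter_subset_left)

/-- The double sum of same-cluster lca sizes. -/
noncomputable def dsum (L : Finset (Fin n)) (t : HTree n) : ℝ :=
  ∑ i ∈ t.leaves, ∑ j ∈ t.leaves,
    if i = j then 0 else if (i ∈ L ↔ j ∈ L) then (t.lcaSize i j : ℝ) else 0

lemma cross_count (A B L : Finset (Fin n)) (K : ℝ) :
    (∑ i ∈ A, ∑ j ∈ B, if (i ∈ L ↔ j ∈ L) then K else 0)
      = (((A ∩ L).card : ℝ) * ((B ∩ L).card : ℝ)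
          + ((A ∩ Lᶜ).card : ℝ) * ((B ∩ Lᶜ).card : ℝ)) * K := by
  have inner : ∀ i : Fin n, (∑ j ∈ B, if (i ∈ L ↔ j ∈ L) then K else 0)
      = if i ∈ L then ((B ∩ L).card : ℝ) * K else ((B ∩ Lᶜ).card : ℝ) * K := by
    intro i
    by_cases hi : i ∈ L
    · rw [if_pos hi]
      rw [show (∑ j ∈ B, if (i ∈ L ↔ j ∈ L) then K else 0)
            = ∑ j ∈ B, if j ∈ L then K else 0 from by
          apply Finset.sum_congr rfl; intro j _; by_cases hj : j ∈ L <;> simp [hi, hj]]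
      rw [Finset.sum_ite_mem, Finset.sum_const]
      simp [mul_comm]
    · rw [if_neg hi]
      rw [show (∑ j ∈ B, if (i ∈ L ↔ j ∈ L) then K else 0)
            = ∑ j ∈ B, if j ∈ Lᶜ then K else 0 from by
          apply Finset.sum_congr rfl; intro j _; by_cases hj : j ∈ L <;> simp [hi, hj]]
      rw [Finset.sum_ite_mem, Finset.sum_const]
      simp [mul_comm]
  rw [Finset.sum_congr rfl (fun i _ => inner i)]
  rw [Finset.sum_ite, Finset.sum_const, Finset.sum_const, Finset.filter_mem_eq_inter]
  have hAc : A.filter (fun i => ¬ i ∈ L) = A ∩ Lᶜ := by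
    ext x; simp [Finset.mem_filter]
  rw [hAc]
  simp only [nsmul_eq_mul]
  ring

lemma F_zero : F 0 = 0 := by simp [F]

lemma F_le_one {k : ℕ} (h : k ≤ 1) : F k = 0 := by
  interval_cases k <;> norm_num [F]

lemma dsum_eq (L : Finset (Fin n)) (t : HTree n) (hnd : t.leafList.Nodup) :
    dsum L t = 2 * (F (t.leaves ∩ L).card + F (t.leaves ∩ Lᶜ).card + sur L t) := by
  induction t with
  | leaf v =>
      have h1 : ((HTree.leaf v).leaves ∩ L).card ≤ 1 := by
        refine le_trans (Finset.card_le_card Finset.inter_subset_left) ?_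
        simp [leaves_leaf]
      have h2 : ((HTree.leaf v).leaves ∩ Lᶜ).card ≤ 1 := by
        refine le_trans (Finset.card_le_card Finset.inter_subset_left) ?_
        simp [leaves_leaf]
      rw [F_le_one h1, F_le_one h2]
      simp [dsum, leaves_leaf, sur]
  | node l r ihl ihr =>
      obtain ⟨hl, hr, hd⟩ := nodup_node hnd
      have ihl' := ihl hl
      have ihr' := ihr hr
      have eAA : (∑ i ∈ l.leaves, ∑ j ∈ l.leaves,
          if i = j then 0 else if (i ∈ L ↔ j ∈ L) then ((HTree.node l r).lcaSize i j : ℝ) else 0)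
          = dsum L l := by
        apply Finset.sum_congr rfl; intro i hi
        apply Finset.sum_congr rfl; intro j hj
        by_cases hij : i = j
        · simp [hij]
        · have hlca : (HTree.node l r).lcaSize i j = l.lcaSize i j := by
            simp only [lcaSize]; rw [if_pos ⟨hi, hj⟩]
          simp [hij, hlca]
      have eBB : (∑ i ∈ r.leaves, ∑ j ∈ r.leaves,
          if i = j then 0 else if (i ∈ L ↔ j ∈ L) then ((HTree.node l r).lcaSize i j : ℝ) else 0)
          = dsum L r := by
        apply Finset.sum_congr rfl; intro i hi
        apply Finset.sum_congr rfl; intro j hj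
        by_cases hij : i = j
        · simp [hij]
        · have hnl : ¬ (i ∈ l.leaves ∧ j ∈ l.leaves) := by
            intro hc
            exact Finset.disjoint_right.mp hd hi hc.1
          have hlca : (HTree.node l r).lcaSize i j = r.lcaSize i j := by
            simp only [lcaSize]; rw [if_neg hnl, if_pos ⟨hi, hj⟩]
          simp [hij, hlca]
      have eAB : (∑ i ∈ l.leaves, ∑ j ∈ r.leaves,
          if i = j then 0 else if (i ∈ L ↔ j ∈ L) then ((HTree.node l r).lcaSize i j : ℝ) else 0)
          = (((l.leaves ∩ L).card : ℝ) * ((r.leaves ∩ L).card : ℝ)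
              + ((l.leaves ∩ Lᶜ).card : ℝ) * ((r.leaves ∩ Lᶜ).card : ℝ))
            * (((l.leaves ∪ r.leaves).card : ℕ) : ℝ) := by
        rw [← cross_count]
        apply Finset.sum_congr rfl; intro i hi
        apply Finset.sum_congr rfl; intro j hj
        have hij : i ≠ j := by
          intro h; exact Finset.disjoint_left.mp hd hi (h ▸ hj)
        have hlca : (HTree.node l r).lcaSize i j = (l.leaves ∪ r.leaves).card := by
          simp only [lcaSize]
          rw [if_neg (fun hc => Finset.disjoint_right.mp hd hj hc.2),
            if_neg (fun hc => Finset.disjoint_left.mp hd hi hc.1)]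
        simp [hij, hlca]
      have eBA : (∑ i ∈ r.leaves, ∑ j ∈ l.leaves,
          if i = j then 0 else if (i ∈ L ↔ j ∈ L) then ((HTree.node l r).lcaSize i j : ℝ) else 0)
          = (((r.leaves ∩ L).card : ℝ) * ((l.leaves ∩ L).card : ℝ)
              + ((r.leaves ∩ Lᶜ).card : ℝ) * ((l.leaves ∩ Lᶜ).card : ℝ))
            * (((l.leaves ∪ r.leaves).card : ℕ) : ℝ) := by
        rw [← cross_count]
        apply Finset.sum_congr rfl; intro i hi
        apply Finset.sum_congr rfl; intro j hj
        have hij : i ≠ j := by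
          intro h; exact Finset.disjoint_left.mp hd (h ▸ hj) hi
        have hlca : (HTree.node l r).lcaSize i j = (l.leaves ∪ r.leaves).card := by
          simp only [lcaSize]
          rw [if_neg (fun hc => Finset.disjoint_right.mp hd hi hc.1),
            if_neg (fun hc => Finset.disjoint_left.mp hd hj hc.2)]
        simp [hij, hlca]
      have expand : dsum L (HTree.node l r)
          = (∑ i ∈ l.leaves, ∑ j ∈ l.leaves,
              if i = j then 0 else if (i ∈ L ↔ j ∈ L) then ((HTree.node l r).lcaSize i j : ℝ) else 0)
            + (∑ i ∈ l.leaves, ∑ j ∈ r.leaves,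
              if i = j then 0 else if (i ∈ L ↔ j ∈ L) then ((HTree.node l r).lcaSize i j : ℝ) else 0)
            + ((∑ i ∈ r.leaves, ∑ j ∈ l.leaves,
              if i = j then 0 else if (i ∈ L ↔ j ∈ L) then ((HTree.node l r).lcaSize i j : ℝ) else 0)
            + (∑ i ∈ r.leaves, ∑ j ∈ r.leaves,
              if i = j then 0 else if (i ∈ L ↔ j ∈ L) then ((HTree.node l r).lcaSize i j : ℝ) else 0)) := by
        rw [dsum, leaves_node, Finset.sum_union hd]
        rw [show (∑ i ∈ l.leaves, ∑ j ∈ l.leaves ∪ r.leaves,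
            if i = j then 0 else if (i ∈ L ↔ j ∈ L) then ((HTree.node l r).lcaSize i j : ℝ) else 0)
            = _ + _ from Finset.sum_congr rfl (fun i _ => Finset.sum_union hd) |>.trans
              Finset.sum_add_distrib]
        rw [show (∑ i ∈ r.leaves, ∑ j ∈ l.leaves ∪ r.leaves,
            if i = j then 0 else if (i ∈ L ↔ j ∈ L) then ((HTree.node l r).lcaSize i j : ℝ) else 0)
            = _ + _ from Finset.sum_congr rfl (fun i _ => Finset.sum_union hd) |>.trans
              Finset.sum_add_distrib]
      rw [expand, eAA, eBB, eAB, eBA, ihl', ihr']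
      have hcL : ((HTree.node l r).leaves ∩ L).card = (l.leaves ∩ L).card + (r.leaves ∩ L).card := by
        rw [leaves_node]; exact card_union_inter _ _ _ hd
      have hcLc : ((HTree.node l r).leaves ∩ Lᶜ).card
          = (l.leaves ∩ Lᶜ).card + (r.leaves ∩ Lᶜ).card := by
        rw [leaves_node]; exact card_union_inter _ _ _ hd
      have hcU : (l.leaves ∪ r.leaves).card
          = ((l.leaves ∩ L).card + (l.leaves ∩ Lᶜ).card)
            + ((r.leaves ∩ L).card + (r.leaves ∩ Lᶜ).card) := by
        rw [Finset.card_union_of_disjoint hd, card_inter_add_card_inter_compl,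
          card_inter_add_card_inter_compl]
      rw [hcL, hcLc, hcU, F_add, F_add]
      simp only [sur]
      push_cast
      ring

end HTree

namespace HTree

variable {n : ℕ}

lemma two_mul_pairsum (g : Fin n → Fin n → ℝ) (hsymm : ∀ i j, g i j = g j i) :
    2 * (∑ p ∈ Finset.univ.filter (fun p : Fin n × Fin n => p.1 < p.2), g p.1 p.2)
      = ∑ i : Fin n, ∑ j : Fin n, if i = j then 0 else g i j := by
  have h0 : (∑ i : Fin n, ∑ j : Fin n, if i = j then 0 else g i j)
      = ∑ pp : Fin n × Fin n, if pp.1 = pp.2 then 0 else g pp.1 pp.2 := by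
    rw [← Finset.univ_product_univ, Finset.sum_product]
  rw [h0, ← Finset.sum_filter_add_sum_filter_not Finset.univ
    (fun pp : Fin n × Fin n => pp.1 < pp.2)]
  have h1 : (∑ pp ∈ Finset.univ.filter (fun pp : Fin n × Fin n => pp.1 < pp.2),
      if pp.1 = pp.2 then 0 else g pp.1 pp.2)
      = ∑ pp ∈ Finset.univ.filter (fun pp : Fin n × Fin n => pp.1 < pp.2), g pp.1 pp.2 := by
    apply Finset.sum_congr rfl
    intro pp hpp
    rw [Finset.mem_filter] at hpp
    rw [if_neg (ne_of_lt hpp.2)]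
  have h2 : (∑ pp ∈ Finset.univ.filter (fun pp : Fin n × Fin n => ¬ pp.1 < pp.2),
      if pp.1 = pp.2 then 0 else g pp.1 pp.2)
      = ∑ pp ∈ Finset.univ.filter (fun pp : Fin n × Fin n => pp.1 < pp.2), g pp.1 pp.2 := by
    rw [← Finset.sum_filter_add_sum_filter_not
      (Finset.univ.filter (fun pp : Fin n × Fin n => ¬ pp.1 < pp.2))
      (fun pp : Fin n × Fin n => pp.2 < pp.1)]
    have hz : (∑ pp ∈ (Finset.univ.filter (fun pp : Fin n × Fin n => ¬ pp.1 < pp.2)).filter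
        (fun pp : Fin n × Fin n => ¬ pp.2 < pp.1),
        if pp.1 = pp.2 then 0 else g pp.1 pp.2) = 0 := by
      apply Finset.sum_eq_zero
      intro pp hpp
      simp only [Finset.mem_filter] at hpp
      have : pp.1 = pp.2 := le_antisymm (not_lt.mp hpp.2) (not_lt.mp hpp.1.2)
      rw [if_pos this]
    rw [hz, add_zero]
    have hset : (Finset.univ.filter (fun pp : Fin n × Fin n => ¬ pp.1 < pp.2)).filter
        (fun pp : Fin n × Fin n => pp.2 < pp.1)
        = Finset.univ.filter (fun pp : Fin n × Fin n => pp.2 < pp.1) := by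
      rw [Finset.filter_filter]
      apply Finset.filter_congr
      intro pp _
      constructor
      · exact fun h => h.2
      · exact fun h => ⟨asymm h, h⟩
    rw [hset]
    apply Finset.sum_equiv (Equiv.prodComm (Fin n) (Fin n))
    · intro pp
      simp [Equiv.prodComm]
    · intro pp hpp
      simp only [Finset.mem_filter] at hpp
      simp only [Equiv.prodComm, Equiv.coe_fn_mk, Prod.fst_swap, Prod.snd_swap,
        if_neg (ne_of_gt hpp.2), if_neg (ne_of_lt hpp.2)]
      exact hsymm pp.1 pp.2
  rw [h1, h2]
  ring

lemma pairCost_decomp (p q : ℝ) (L : Finset (Fin n)) (T : HTree n) (hT : T.IsFullTree) :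
    2 * pairCost (fun i j => if (i ∈ L ↔ j ∈ L) then p else q) T
      = q * dsum Finset.univ T + (p - q) * dsum L T := by
  have hsymm : ∀ i j : Fin n, (if (i ∈ L ↔ j ∈ L) then p else q) * (T.lcaSize i j : ℝ)
      = (if (j ∈ L ↔ i ∈ L) then p else q) * (T.lcaSize j i : ℝ) := by
    intro i j
    rw [lcaSize_comm]
    congr 1
    by_cases h1 : i ∈ L <;> by_cases h2 : j ∈ L <;> simp [h1, h2]
  rw [pairCost, two_mul_pairsum _ hsymm]
  rw [dsum, dsum, hT.2]
  rw [Finset.mul_sum, Finset.mul_sum, ← Finset.sum_add_distrib]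
  apply Finset.sum_congr rfl
  intro i _
  rw [Finset.mul_sum, Finset.mul_sum, ← Finset.sum_add_distrib]
  apply Finset.sum_congr rfl
  intro j _
  simp only [Finset.mem_univ, iff_self, if_true]
  by_cases hij : i = j
  · simp [hij]
  · by_cases hL : i ∈ L ↔ j ∈ L <;> simp [hij, hL] <;> ring

end HTree

/-- The core real-number inequality at a "terminal" node. -/
lemma core_ineq (s t a b c d : ℝ) (hs : 0 < s)
    (ha0 : 0 ≤ a) (hb0 : 0 ≤ b) (hc0 : 0 ≤ c) (hd0 : 0 ≤ d)
    (hab1 : s ≤ a + b) (hcd1 : s ≤ c + d) (hab2 : a + b ≤ s + t) (hcd2 : c + d ≤ s + t)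
    (hB1 : t < a ∨ t < d) (hB2 : t < c ∨ t < b)
    (hM1 : a < s ∨ c < s) (hM2 : b < s ∨ d < s) :
    t * s < a * b + c * d + s * (s + t - a - b) + s * (s + t - c - d) := by
  by_cases h1 : a < s ∧ b < s
  · have hprod : 0 < (s - a) * (s - b) := mul_pos (by linarith [h1.1]) (by linarith [h1.2])
    have hrest : 0 ≤ s * (s + t - c - d) := mul_nonneg hs.le (by linarith)
    nlinarith [mul_nonneg hc0 hd0]
  by_cases h2 : c < s ∧ d < s
  · have hprod : 0 < (s - c) * (s - d) := mul_pos (by linarith [h2.1]) (by linarith [h2.2])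
    have hrest : 0 ≤ s * (s + t - a - b) := mul_nonneg hs.le (by linarith)
    nlinarith [mul_nonneg ha0 hb0]
  exfalso
  push_neg at h1 h2
  rcases le_or_gt s a with hsa | hsa
  · have hcs : c < s := by
      rcases hM1 with h | h
      · linarith
      · exact h
    have hsd : s ≤ d := h2 hcs
    have hbt : b ≤ t := by linarith
    have hct : c ≤ t := by linarith
    rcases hB2 with h | h <;> linarith
  · have hsb : s ≤ b := h1 hsa
    have hds : d < s := by
      rcases hM2 with h | h
      · linarith
      · exact h
    have hsc : s ≤ c := by
      by_contra hcon
      push_neg at hcon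
      exact absurd (h2 hcon) (not_le.mpr hds)
    have hat : a ≤ t := by linarith
    have hdt : d ≤ t := by linarith
    rcases hB1 with h | h <;> linarith

lemma phi_ge_ac (a b c d : ℝ) (ha : 0 ≤ a) (hb : 0 ≤ b) (hc : 0 ≤ c) (hd : 0 ≤ d) :
    a * c * (b + d) ≤ a * b * (c + d) + c * d * (a + b) := by
  nlinarith [mul_nonneg (mul_nonneg ha hb) hd, mul_nonneg (mul_nonneg hc hd) hb]

lemma phi_ge_bd (a b c d : ℝ) (ha : 0 ≤ a) (hb : 0 ≤ b) (hc : 0 ≤ c) (hd : 0 ≤ d) :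
    b * d * (a + c) ≤ a * b * (c + d) + c * d * (a + b) := by
  nlinarith [mul_nonneg (mul_nonneg ha hb) hc, mul_nonneg (mul_nonneg ha hc) hd]

namespace HTree

/-- The main inductive lower bound on the surplus of a tree none of whose
splits is `ε`-good. -/
lemma main_lower {n : ℕ} (m : ℕ) (ε : ℝ) (hε0 : 0 < ε) (hε : ε < 1 / 6) (hm : 1 ≤ m)
    (L : Finset (Fin n)) (hn2 : (n : ℝ) = 2 * m) (hLcard : L.card = m) (hLccard : Lᶜ.card = m)
    (t : HTree n) (hnd : t.leafList.Nodup)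
    (hgood : ∀ l r : HTree n, Subtree (.node l r) t →
      ¬ ((1 - ε) * n / 2 ≤ (((l.leaves ∪ r.leaves) ∩ L).card : ℝ) ∧
         (1 - ε) * n / 2 ≤ (((l.leaves ∪ r.leaves) ∩ Lᶜ).card : ℝ) ∧
         ((((l.leaves ∩ L).card : ℝ) ≤ ε * n / 2 ∧ ((r.leaves ∩ Lᶜ).card : ℝ) ≤ ε * n / 2) ∨
          (((l.leaves ∩ Lᶜ).card : ℝ) ≤ ε * n / 2 ∧ ((r.leaves ∩ L).card : ℝ) ≤ ε * n / 2))))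
    (hA : (1 - ε) * m ≤ ((t.leaves ∩ L).card : ℝ))
    (hC : (1 - ε) * m ≤ ((t.leaves ∩ Lᶜ).card : ℝ)) :
    ε * (1 - ε) ^ 2 * m ^ 3
      - (1 - ε) ^ 2 * m ^ 2 * ((m - ((t.leaves ∩ L).card : ℝ)) + (m - ((t.leaves ∩ Lᶜ).card : ℝ)))
      < sur L t := by
  induction t with
  | leaf v =>
      exfalso
      have hsum : ((HTree.leaf v).leaves ∩ L).card + ((HTree.leaf v).leaves ∩ Lᶜ).card = 1 := by
        rw [card_inter_add_card_inter_compl, leaves_leaf, Finset.card_singleton]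
      have hm1 : (1 : ℝ) ≤ (m : ℝ) := by exact_mod_cast hm
      have h56 : (5 : ℝ) / 6 ≤ (1 - ε) * m := by nlinarith
      have hcast : (((HTree.leaf v).leaves ∩ L).card : ℝ)
          + (((HTree.leaf v).leaves ∩ Lᶜ).card : ℝ) = 1 := by exact_mod_cast hsum
      linarith
  | node l r ihl ihr =>
      obtain ⟨hl, hr, hd⟩ := nodup_node hnd
      set a : ℝ := ((l.leaves ∩ L).card : ℝ) with hadef
      set b : ℝ := ((r.leaves ∩ L).card : ℝ) with hbdef
      set c : ℝ := ((l.leaves ∩ Lᶜ).card : ℝ) with hcdef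
      set d : ℝ := ((r.leaves ∩ Lᶜ).card : ℝ) with hddef
      have ha0 : 0 ≤ a := by positivity
      have hb0 : 0 ≤ b := by positivity
      have hc0 : 0 ≤ c := by positivity
      have hd0 : 0 ≤ d := by positivity
      have hAab : (((HTree.node l r).leaves ∩ L).card : ℝ) = a + b := by
        rw [leaves_node, card_union_inter _ _ _ hd]
        push_cast
        rfl
      have hCcd : (((HTree.node l r).leaves ∩ Lᶜ).card : ℝ) = c + d := by
        rw [leaves_node, card_union_inter _ _ _ hd]
        push_cast
        rfl
      have habm : a + b ≤ (m : ℝ) := by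
        rw [← hAab]
        have h : ((HTree.node l r).leaves ∩ L).card ≤ m := by
          rw [← hLcard]
          exact Finset.card_le_card Finset.inter_subset_right
        exact_mod_cast h
      have hcdm : c + d ≤ (m : ℝ) := by
        rw [← hCcd]
        have h : ((HTree.node l r).leaves ∩ Lᶜ).card ≤ m := by
          rw [← hLccard]
          exact Finset.card_le_card Finset.inter_subset_right
        exact_mod_cast h
      rw [hAab] at hA ⊢
      rw [hCcd] at hC ⊢
      have hsplit : sur L (HTree.node l r)
          = (a * b * (c + d) + c * d * (a + b)) + sur L l + sur L r := by
        simp only [sur]; rfl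
      have hsurl : 0 ≤ sur L l := sur_nonneg L l
      have hsurr : 0 ≤ sur L r := sur_nonneg L r
      have hε1 : (0 : ℝ) < 1 - ε := by linarith
      have hm1 : (1 : ℝ) ≤ (m : ℝ) := by exact_mod_cast hm
      have hs : (0 : ℝ) < (1 - ε) * m := by positivity
      by_cases hbl : (1 - ε) * m ≤ a ∧ (1 - ε) * m ≤ c
      · have ih := ihl hl (fun l' r' hsub => hgood l' r' (Subtree.left hsub)) hbl.1 hbl.2
        clear ihl ihr hgood hnd
        have hac : ((1 - ε) * m) * ((1 - ε) * m) ≤ a * c :=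
          mul_le_mul hbl.1 hbl.2 hs.le ha0
        have h2 : ((1 - ε) * m) * ((1 - ε) * m) * (b + d) ≤ a * c * (b + d) :=
          mul_le_mul_of_nonneg_right hac (by positivity)
        have h3 : a * c * (b + d) ≤ a * b * (c + d) + c * d * (a + b) :=
          phi_ge_ac a b c d ha0 hb0 hc0 hd0
        rw [hsplit]
        have hgoal : ε * (1 - ε) ^ 2 * (m : ℝ) ^ 3
            - (1 - ε) ^ 2 * (m : ℝ) ^ 2 * (((m : ℝ) - (a + b)) + ((m : ℝ) - (c + d)))
            = (ε * (1 - ε) ^ 2 * (m : ℝ) ^ 3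
                - (1 - ε) ^ 2 * (m : ℝ) ^ 2 * (((m : ℝ) - a) + ((m : ℝ) - c)))
              + ((1 - ε) * m) * ((1 - ε) * m) * (b + d) := by ring
        rw [hgoal]
        linarith [ih, h2, h3, hsurr]
      · by_cases hbr : (1 - ε) * m ≤ b ∧ (1 - ε) * m ≤ d
        · have ih := ihr hr (fun l' r' hsub => hgood l' r' (Subtree.right hsub)) hbr.1 hbr.2
          clear ihl ihr hgood hnd
          have hbd : ((1 - ε) * m) * ((1 - ε) * m) ≤ b * d :=
            mul_le_mul hbr.1 hbr.2 hs.le hb0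
          have h2 : ((1 - ε) * m) * ((1 - ε) * m) * (a + c) ≤ b * d * (a + c) :=
            mul_le_mul_of_nonneg_right hbd (by positivity)
          have h3 : b * d * (a + c) ≤ a * b * (c + d) + c * d * (a + b) :=
            phi_ge_bd a b c d ha0 hb0 hc0 hd0
          rw [hsplit]
          have hgoal : ε * (1 - ε) ^ 2 * (m : ℝ) ^ 3
              - (1 - ε) ^ 2 * (m : ℝ) ^ 2 * (((m : ℝ) - (a + b)) + ((m : ℝ) - (c + d)))
              = (ε * (1 - ε) ^ 2 * (m : ℝ) ^ 3
                  - (1 - ε) ^ 2 * (m : ℝ) ^ 2 * (((m : ℝ) - b) + ((m : ℝ) - d)))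
                + ((1 - ε) * m) * ((1 - ε) * m) * (a + c) := by ring
          rw [hgoal]
          linarith [ih, h2, h3, hsurl]
        · push_neg at hbl hbr
          have hnot := hgood l r (Subtree.refl _)
          clear ihl ihr hgood hnd
          push_neg at hnot
          have hn2' : (n : ℝ) / 2 = m := by rw [hn2]; ring
          have hcond1 : (1 - ε) * n / 2 ≤ (((l.leaves ∪ r.leaves) ∩ L).card : ℝ) := by
            rw [← leaves_node, hAab]
            calc (1 - ε) * n / 2 = (1 - ε) * ((n : ℝ) / 2) := by ring
            _ = (1 - ε) * m := by rw [hn2']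
            _ ≤ a + b := hA
          have hcond2 : (1 - ε) * n / 2 ≤ (((l.leaves ∪ r.leaves) ∩ Lᶜ).card : ℝ) := by
            rw [← leaves_node, hCcd]
            calc (1 - ε) * n / 2 = (1 - ε) * ((n : ℝ) / 2) := by ring
            _ = (1 - ε) * m := by rw [hn2']
            _ ≤ c + d := hC
          have hB := hnot hcond1 hcond2
          rw [show ε * (n : ℝ) / 2 = ε * m from by rw [hn2]; ring] at hB
          have hB1 : ε * (m : ℝ) < a ∨ ε * (m : ℝ) < d := by
            rcases le_or_gt a (ε * m) with h | h
            · exact Or.inr (hB.1 h)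
            · exact Or.inl h
          have hB2 : ε * (m : ℝ) < c ∨ ε * (m : ℝ) < b := by
            rcases le_or_gt c (ε * m) with h | h
            · exact Or.inr (hB.2 h)
            · exact Or.inl h
          have hM1 : a < (1 - ε) * m ∨ c < (1 - ε) * m := by
            by_contra hcon
            push_neg at hcon
            exact absurd (hbl hcon.1) (not_lt.mpr hcon.2)
          have hM2 : b < (1 - ε) * m ∨ d < (1 - ε) * m := by
            by_contra hcon
            push_neg at hcon
            exact absurd (hbr hcon.1) (not_lt.mpr hcon.2)
          have hcore := core_ineq ((1 - ε) * m) (ε * m) a b c d hs ha0 hb0 hc0 hd0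
            (by linarith) (by linarith) (by linarith) (by linarith) hB1 hB2 hM1 hM2
          have hmul := mul_lt_mul_of_pos_left hcore hs
          have h5a : (a * b) * ((1 - ε) * m) ≤ (a * b) * (c + d) :=
            mul_le_mul_of_nonneg_left hC (mul_nonneg ha0 hb0)
          have h5b : (c * d) * ((1 - ε) * m) ≤ (c * d) * (a + b) :=
            mul_le_mul_of_nonneg_left hA (mul_nonneg hc0 hd0)
          rw [hsplit]
          linarith [hmul, h5a, h5b, hsurl, hsurr]

end HTree

/-- In the `(n,p,q)`-planted partition model (clusters `L = {i < n/2}` and `R = Lᶜ`),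
if `T*` has top split `(L, R)` and `T` is not `ε`-good for some `0 < ε < 1/6`, then
`E[cost(T)] > E[cost(T*)] + (1/16) ε (p-q) n³`.  Here `E[cost(T)]` is
`Σ_{{i,j}} Pr(edge ij) |leaves(T[i ∨ j])|`. -/
theorem not_eps_good_costly (n : ℕ) (hn : Even n) (p q ε : ℝ)
    (hq0 : 0 ≤ q) (hqp : q < p) (hp1 : p ≤ 1) (hε0 : 0 < ε) (hε : ε < 1 / 6)
    (L : Finset (Fin n)) (hL : L = Finset.univ.filter (fun i : Fin n => i.val < n / 2))
    (Tstar : HTree n) (hTs : Tstar.IsFullTree)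
    (htop : ∃ l r : HTree n, Tstar = .node l r ∧ (l.leaves = L ∨ r.leaves = L))
    (T : HTree n) (hT : T.IsFullTree) (hbad : ¬ T.EpsGood ε L) :
    Tstar.pairCost (fun i j => if (i ∈ L ↔ j ∈ L) then p else q)
        + (1 / 16) * ε * (p - q) * (n : ℝ) ^ 3
      < T.pairCost (fun i j => if (i ∈ L ↔ j ∈ L) then p else q) := by
  classical
  obtain ⟨v, hv⟩ := HTree.mem_leafList_nonempty T
  have hn0 : 0 < n := v.pos
  obtain ⟨k, hk⟩ := hn
  set m : ℕ := n / 2 with hmdef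
  have hnm : n = 2 * m := by omega
  have hm : 1 ≤ m := by omega
  have hmn : m ≤ n := by omega
  have hn2 : (n : ℝ) = 2 * (m : ℝ) := by exact_mod_cast congrArg (Nat.cast : ℕ → ℝ) hnm
  have hLcard : L.card = m := by
    rw [hL]
    have hmap : (Finset.univ.filter (fun i : Fin n => i.val < n / 2))
        = Finset.map ⟨fun i : Fin m => Fin.castLE hmn i,
            by intro a b hab; simpa [Fin.ext_iff] using hab⟩ Finset.univ := by
      ext x
      simp only [Finset.mem_filter, Finset.mem_map, Finset.mem_univ, true_and,
        Function.Embedding.coeFn_mk, Fin.ext_iff, Fin.castLE]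
      constructor
      · intro hx; exact ⟨⟨x.val, hx⟩, rfl⟩
      · rintro ⟨y, hy⟩; rw [← hy]; exact y.isLt
    rw [hmap]
    simp
  have hLccard : Lᶜ.card = m := by
    have := Finset.card_compl (α := Fin n) L
    rw [hLcard] at this
    simp only [Fintype.card_fin] at this
    omega
  -- surplus lower bound for T
  have hgood : ∀ l r : HTree n, HTree.Subtree (.node l r) T →
      ¬ ((1 - ε) * n / 2 ≤ (((l.leaves ∪ r.leaves) ∩ L).card : ℝ) ∧
         (1 - ε) * n / 2 ≤ (((l.leaves ∪ r.leaves) ∩ Lᶜ).card : ℝ) ∧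
         ((((l.leaves ∩ L).card : ℝ) ≤ ε * n / 2 ∧ ((r.leaves ∩ Lᶜ).card : ℝ) ≤ ε * n / 2) ∨
          (((l.leaves ∩ Lᶜ).card : ℝ) ≤ ε * n / 2 ∧ ((r.leaves ∩ L).card : ℝ) ≤ ε * n / 2))) :=
    fun l r hsub hcond => hbad ⟨l, r, hsub, hcond.1, hcond.2.1, hcond.2.2⟩
  have hTL : (T.leaves ∩ L).card = m := by rw [hT.2, Finset.univ_inter, hLcard]
  have hTLc : (T.leaves ∩ Lᶜ).card = m := by rw [hT.2, Finset.univ_inter, hLccard]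
  have hm1 : (1 : ℝ) ≤ (m : ℝ) := by exact_mod_cast hm
  have hA : (1 - ε) * m ≤ ((T.leaves ∩ L).card : ℝ) := by
    rw [hTL]; nlinarith
  have hC : (1 - ε) * m ≤ ((T.leaves ∩ Lᶜ).card : ℝ) := by
    rw [hTLc]; nlinarith
  have hmain := HTree.main_lower m ε hε0 hε hm L hn2 hLcard hLccard T hT.1 hgood hA hC
  rw [hTL, hTLc] at hmain
  have hsur : ε * (1 - ε) ^ 2 * (m : ℝ) ^ 3 < HTree.sur L T := by
    have : ((m : ℝ) - m) + ((m : ℝ) - m) = 0 := by ring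
    rw [this, mul_zero, sub_zero] at hmain
    exact hmain
  -- cost decompositions
  have hFn : (Finset.univ ∩ (Finset.univ : Finset (Fin n))).card = n := by simp
  have hFnc : (Finset.univ ∩ (Finset.univ : Finset (Fin n))ᶜ).card = 0 := by simp
  have hdall : ∀ S : HTree n, S.IsFullTree →
      HTree.dsum Finset.univ S = 2 * HTree.F n := by
    intro S hS
    rw [HTree.dsum_eq _ _ hS.1, hS.2, hFn, hFnc, HTree.F_zero,
      HTree.sur_of_subset _ _ (Finset.subset_univ _)]
    ring
  have hdL : ∀ S : HTree n, S.IsFullTree →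
      HTree.dsum L S = 2 * (HTree.F m + HTree.F m + HTree.sur L S) := by
    intro S hS
    rw [HTree.dsum_eq _ _ hS.1, hS.2, Finset.univ_inter, Finset.univ_inter, hLcard, hLccard]
  have e1 := HTree.pairCost_decomp p q L T hT
  rw [hdall T hT, hdL T hT] at e1
  have e2 := HTree.pairCost_decomp p q L Tstar hTs
  rw [hdall Tstar hTs, hdL Tstar hTs] at e2
  -- the surplus of Tstar vanishes
  have hsurstar : HTree.sur L Tstar = 0 := by
    obtain ⟨l, r, rfl, hlr⟩ := htop
    obtain ⟨hl, hr, hd⟩ := HTree.nodup_node hTs.1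
    have huniv : l.leaves ∪ r.leaves = Finset.univ := by
      rw [← HTree.leaves_node]; exact hTs.2
    rcases hlr with hll | hrl
    · have hrL : r.leaves = Lᶜ := by
        ext x
        simp only [Finset.mem_compl]
        constructor
        · intro hx hxL
          exact Finset.disjoint_left.mp hd (hll ▸ hxL) hx
        · intro hx
          have : x ∈ l.leaves ∪ r.leaves := huniv ▸ Finset.mem_univ x
          rcases Finset.mem_union.mp this with h | h
          · exact absurd (hll ▸ h) hx
          · exact h
      have hsl : HTree.sur L l = 0 := HTree.sur_of_subset L l (by rw [hll])
      have hsr : HTree.sur L r = 0 := HTree.sur_of_subset_compl L r (by rw [hrL])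
      simp only [HTree.sur, hsl, hsr, hll, hrL]
      simp only [Finset.inter_compl, Finset.card_empty, Nat.cast_zero]
      have : Lᶜ ∩ L = ∅ := by rw [Finset.inter_comm]; exact Finset.inter_compl L
      simp [this]
    · have hlL : l.leaves = Lᶜ := by
        ext x
        simp only [Finset.mem_compl]
        constructor
        · intro hx hxL
          exact Finset.disjoint_left.mp hd hx (hrl ▸ hxL)
        · intro hx
          have : x ∈ l.leaves ∪ r.leaves := huniv ▸ Finset.mem_univ x
          rcases Finset.mem_union.mp this with h | h
          · exact h
          · exact absurd (hrl ▸ h) hx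
      have hsl : HTree.sur L l = 0 := HTree.sur_of_subset_compl L l (by rw [hlL])
      have hsr : HTree.sur L r = 0 := HTree.sur_of_subset L r (by rw [hrl])
      simp only [HTree.sur, hsl, hsr, hlL, hrl]
      simp only [Finset.inter_compl, Finset.card_empty, Nat.cast_zero]
      have : Lᶜ ∩ L = ∅ := by rw [Finset.inter_comm]; exact Finset.inter_compl L
      simp [this]
  rw [hsurstar] at e2
  -- finish
  have hpq : (0 : ℝ) < p - q := by linarith
  have hn3 : ((n : ℝ)) ^ 3 = 8 * (m : ℝ) ^ 3 := by rw [hn2]; ring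
  rw [hn3]
  have hm0 : (0 : ℝ) < (m : ℝ) := by linarith
  have h12 : (1 : ℝ) / 2 < (1 - ε) ^ 2 := by nlinarith
  have hsur2 : (1 / 2) * ε * (m : ℝ) ^ 3 < HTree.sur L T := by
    nlinarith [mul_pos hε0 (pow_pos hm0 3)]
  have hfin := mul_lt_mul_of_pos_left hsur2 hpq
  linarith [e1, e2, hfin]
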